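/- Fix an integer m ≥ 2 and let n ∈ ℕ. For x ∈ {0,1}^n, let z(x) be the number of coordinates of x equal to 0, let MOD*_m(x) = 1 if m divides z(x) and 0 otherwise, let x^i denote x with its i-th coordinate flipped, and let σ_x = #{ i : 1 ≤ i ≤ n, MOD*_m(x^i) ≠ MOD*_m(x) }. Then Σ_{x ∈ {0,1}^n} σ_x = 2n · Σ_{s=0}^{⌊n/m⌋} C(n, s·m). -/

import Mathlib

/-- The number of coordinates of `x` equal to `0` (i.e. `false`). -/
def zeros {n : ℕ} (x : Fin n → Bool) : ℕ :=
  (Finset.univ.filter fun i => x i = false).card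

/-- The Boolean function `MOD*_m`: outputs `1` (`true`) iff the number of
`0`-coordinates of the input is a multiple of `m`. -/
def modStar (m : ℕ) {n : ℕ} (x : Fin n → Bool) : Bool :=
  decide (m ∣ zeros x)

/-- The sensitivity of `MOD*_m` at `x`: the number of coordinate flips that
change the output. -/
def sens (m : ℕ) {n : ℕ} (x : Fin n → Bool) : ℕ :=
  (Finset.univ.filter fun i =>
    modStar m (Function.update x i (!x i)) ≠ modStar m x).card

open Finset

lemma update_flip_flip {n : ℕ} (x : Fin n → Bool) (i : Fin n) :
    Function.update (Function.update x i (!x i)) i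
      (!(Function.update x i (!x i) i)) = x := by
  simp [Function.update_idem]

lemma zeros_update {n : ℕ} (x : Fin n → Bool) (i : Fin n) :
    zeros (Function.update x i (!x i)) = zeros x + 1 ∨
    zeros x = zeros (Function.update x i (!x i)) + 1 := by
  unfold zeros
  by_cases h : x i = false
  · right
    have hmem : i ∈ univ.filter (fun j => x j = false) := by simp [h]
    have hset : univ.filter (fun j => Function.update x i (!x i) j = false)
        = (univ.filter (fun j => x j = false)).erase i := by
      ext j
      by_cases hji : j = i
      · subst hji; simp [h]
      · simp [Function.update_apply, hji]
    rw [hset, ← Finset.card_erase_add_one hmem]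
  · left
    have hmem : i ∉ univ.filter (fun j => x j = false) := by simp [h]
    have hset : univ.filter (fun j => Function.update x i (!x i) j = false)
        = insert i (univ.filter (fun j => x j = false)) := by
      ext j
      by_cases hji : j = i
      · subst hji; simp [h]
      · simp [Function.update_apply, hji]
    rw [hset, Finset.card_insert_of_notMem hmem]

lemma sensitive_of_dvd {m n : ℕ} (hm : 2 ≤ m) (x : Fin n → Bool) (i : Fin n)
    (hx : m ∣ zeros x) :
    modStar m (Function.update x i (!x i)) ≠ modStar m x := by
  have hnd : ¬ m ∣ zeros (Function.update x i (!x i)) := by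
    intro hd
    have h1 : m ∣ 1 := by
      rcases zeros_update x i with h | h
      · have := Nat.dvd_sub hd hx
        simpa [h] using this
      · have := Nat.dvd_sub hx hd
        simpa [h] using this
    have := Nat.le_of_dvd one_pos h1
    omega
  simp [modStar, hx, hnd]

lemma card_zeros_eq {n : ℕ} (z : ℕ) :
    (univ.filter (fun x : Fin n → Bool => zeros x = z)).card = n.choose z := by
  classical
  have : (univ.filter (fun x : Fin n → Bool => zeros x = z)).card
      = (Finset.powersetCard z (univ : Finset (Fin n))).card := by
    apply Finset.card_bij (fun x _ => univ.filter (fun j => x j = false))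
    · intro x hx
      simp only [mem_filter, mem_univ, true_and] at hx
      simp [Finset.mem_powersetCard, hx, zeros] at *
      exact hx
    · intro x hx y hy hxy
      funext j
      have := Finset.ext_iff.mp hxy j
      simp only [mem_filter, mem_univ, true_and] at this
      cases hxj : x j <;> cases hyj : y j <;> simp_all
    · intro s hs
      refine ⟨fun j => !(decide (j ∈ s)), ?_, ?_⟩
      · simp only [mem_filter, mem_univ, true_and, zeros]
        simp only [Finset.mem_powersetCard] at hs
        have : (univ.filter fun j => (!decide (j ∈ s)) = false) = s := by
          ext j; simp
        exact Finset.mem_filter.mpr ⟨mem_univ _, by show (univ.filter fun j => (!decide (j ∈ s)) = false).card = z; rw [this]; exact hs.2⟩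
      · ext j; simp
  rw [this, Finset.card_powersetCard, Finset.card_univ, Fintype.card_fin]

lemma card_dvd_zeros {m : ℕ} (hm : 0 < m) (n : ℕ) :
    (univ.filter (fun x : Fin n → Bool => m ∣ zeros x)).card
      = ∑ s ∈ Finset.range (n / m + 1), n.choose (s * m) := by
  classical
  have hmem : ∀ x ∈ univ.filter (fun x : Fin n → Bool => m ∣ zeros x),
      zeros x ∈ Finset.range (n + 1) := by
    intro x _
    have : zeros x ≤ n := by
      simpa [zeros] using (Finset.card_filter_le univ (fun i => x i = false))
    simp [Nat.lt_succ_iff, this]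
  rw [Finset.card_eq_sum_card_fiberwise hmem]
  have hfib : ∀ z, ((univ.filter (fun x : Fin n → Bool => m ∣ zeros x)).filter
      (fun x => zeros x = z)).card = if m ∣ z then n.choose z else 0 := by
    intro z
    by_cases hz : m ∣ z
    · rw [if_pos hz, ← card_zeros_eq (n := n) z]
      congr 1
      ext x
      simp only [mem_filter, mem_univ, true_and]
      exact ⟨fun h => h.2, fun h => ⟨h ▸ hz, h⟩⟩
    · rw [if_neg hz]
      convert Finset.card_empty
      ext x
      simp only [mem_filter, mem_univ, true_and, Finset.notMem_empty, iff_false]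
      rintro ⟨h1, rfl⟩
      exact hz h1
  simp only [hfib]
  rw [← Finset.sum_filter]
  apply Finset.sum_nbij' (i := fun z => z / m) (j := fun s => s * m)
  · intro z hz
    simp only [mem_filter, mem_range] at hz
    simp only [mem_range]
    have := Nat.div_le_div_right (c := m) (Nat.lt_succ_iff.mp hz.1)
    omega
  · intro s hs
    simp only [mem_range] at hs
    simp only [mem_filter, mem_range]
    constructor
    · have : s * m ≤ (n / m) * m := Nat.mul_le_mul_right m (by omega)
      have h2 := Nat.div_mul_le_self n m
      omega
    · exact ⟨s, (Nat.mul_comm s m)⟩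
  · intro z hz
    simp only [mem_filter, mem_range] at hz
    exact (Nat.div_mul_cancel hz.2)
  · intro s hs
    exact Nat.mul_div_cancel s hm
  · intro z hz
    simp only [mem_filter, mem_range] at hz
    rw [Nat.div_mul_cancel hz.2]

/-- Equations (11)–(12) of the paper: the total sensitivity of `MOD*_m` on
`{0,1}^n` equals `2n · Σ_{s=0}^{⌊n/m⌋} C(n, s·m)`. -/
theorem total_sensitivity_modStar (m : ℕ) (hm : 2 ≤ m) (n : ℕ) :
    ∑ x : Fin n → Bool, sens m x
      = 2 * n * ∑ s ∈ Finset.range (n / m + 1), n.choose (s * m) := by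
  classical
  set P : (Fin n → Bool) → Fin n → Prop := fun x i =>
    modStar m (Function.update x i (!x i)) ≠ modStar m x with hP
  have hsens : ∀ x : Fin n → Bool, sens m x = ∑ i : Fin n, if P x i then 1 else 0 := by
    intro x
    rw [sens, Finset.card_filter]
  have hflipP : ∀ (x : Fin n → Bool) (i : Fin n),
      P (Function.update x i (!x i)) i ↔ P x i := by
    intro x i
    simp only [hP]
    rw [update_flip_flip x i]
    exact ⟨Ne.symm, Ne.symm⟩
  have hpoint : ∀ (x : Fin n → Bool) (i : Fin n),
      (if P x i then 1 else 0)
        = (if m ∣ zeros x ∧ P x i then 1 else 0)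
          + (if m ∣ zeros (Function.update x i (!x i)) ∧
              P (Function.update x i (!x i)) i then 1 else 0) := by
    intro x i
    by_cases hPx : P x i
    · have hP' : P (Function.update x i (!x i)) i := (hflipP x i).mpr hPx
      have hone : ¬ (m ∣ zeros (Function.update x i (!x i)) ↔ m ∣ zeros x) := by
        intro hiff
        apply hPx
        simp only [hP, ne_eq, modStar, decide_eq_decide, not_not]
        exact hiff
      by_cases hd : m ∣ zeros x
      · have : ¬ m ∣ zeros (Function.update x i (!x i)) := fun h => hone (by tauto)
        simp [hPx, hP', hd, this]
      · have : m ∣ zeros (Function.update x i (!x i)) := by tauto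
        simp only [hd, this, false_and, if_false, true_and, if_pos hP', Nat.zero_add]
        rw [if_pos hPx]
    · have hP' : ¬ P (Function.update x i (!x i)) i := fun h => hPx ((hflipP x i).mp h)
      simp [hPx, hP']
  calc ∑ x : Fin n → Bool, sens m x
      = ∑ x : Fin n → Bool, ∑ i : Fin n,
          ((if m ∣ zeros x ∧ P x i then 1 else 0)
            + (if m ∣ zeros (Function.update x i (!x i)) ∧
                P (Function.update x i (!x i)) i then 1 else 0)) := by
        refine Finset.sum_congr rfl fun x _ => ?_
        rw [hsens x]
        exact Finset.sum_congr rfl fun i _ => hpoint x i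
    _ = (∑ x : Fin n → Bool, ∑ i : Fin n, (if m ∣ zeros x ∧ P x i then 1 else 0))
        + ∑ x : Fin n → Bool, ∑ i : Fin n,
            (if m ∣ zeros (Function.update x i (!x i)) ∧
                P (Function.update x i (!x i)) i then 1 else 0) := by
        rw [← Finset.sum_add_distrib]
        exact Finset.sum_congr rfl fun x _ => by rw [← Finset.sum_add_distrib]
    _ = 2 * ∑ x : Fin n → Bool, ∑ i : Fin n, (if m ∣ zeros x ∧ P x i then 1 else 0) := by
        have hswap : ∀ g : (Fin n → Bool) → Fin n → ℕ,
            ∑ x : Fin n → Bool, ∑ i : Fin n, g x i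
              = ∑ i : Fin n, ∑ x : Fin n → Bool, g x i := fun g => Finset.sum_comm
        rw [hswap (fun x i => if m ∣ zeros (Function.update x i (!x i)) ∧
              P (Function.update x i (!x i)) i then 1 else 0),
          hswap (fun x i => if m ∣ zeros x ∧ P x i then 1 else 0)]
        have : ∀ i : Fin n,
            ∑ x : Fin n → Bool, (if m ∣ zeros (Function.update x i (!x i)) ∧
                P (Function.update x i (!x i)) i then 1 else 0)
              = ∑ x : Fin n → Bool, (if m ∣ zeros x ∧ P x i then 1 else 0) := by
          intro i
          have hinv : Function.Involutive (fun x : Fin n → Bool =>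
              Function.update x i (!x i)) := fun x => update_flip_flip x i
          exact Fintype.sum_bijective _ hinv.bijective _ _ (fun x => rfl)
        rw [Finset.sum_congr rfl fun i _ => this i]
        ring
    _ = 2 * ∑ x : Fin n → Bool, ∑ i : Fin n, (if m ∣ zeros x then 1 else 0) := by
        congr 1
        refine Finset.sum_congr rfl fun x _ => Finset.sum_congr rfl fun i _ => ?_
        by_cases hd : m ∣ zeros x
        · simp [hd, sensitive_of_dvd hm x i hd, hP]
        · simp [hd]
    _ = 2 * n * ∑ s ∈ Finset.range (n / m + 1), n.choose (s * m) := by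
        rw [Finset.sum_congr rfl (fun x _ => Finset.sum_const _),
          ← card_dvd_zeros (by omega : 0 < m) n]
        simp only [smul_eq_mul, Finset.card_univ, Fintype.card_fin]
        rw [← Finset.mul_sum, ← Finset.card_filter]
        ring
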